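/- Let d be a squarefree integer with d ≠ 0, 1, let p > 3 be a prime, and let x = a + b√d be an element of K = ℚ(√d) with a, b ∈ ℚ. Then Re(x^p) = 0 if and only if a = 0 (equivalently, x^p ∈ ℚ·√d if and only if x ∈ ℚ·√d). -/

import Mathlib

open Polynomial

/-- A squarefree integer other than `1` is not the square of a rational. -/
lemma aux_not_sq (d : ℤ) (hd : Squarefree d) (hd1 : d ≠ 1) (q : ℚ) : q ^ 2 ≠ (d : ℚ) := by
  intro h
  have hint : IsIntegral ℤ q := by
    refine ⟨X ^ 2 - C d, ?_, ?_⟩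
    · apply Polynomial.monic_X_pow_sub_C
      norm_num
    · simp only [Polynomial.eval₂_sub, Polynomial.eval₂_pow, Polynomial.eval₂_X,
        Polynomial.eval₂_C, Int.coe_castRingHom, algebraMap_int_eq, h]
      ring
  obtain ⟨k, hk⟩ := IsIntegrallyClosed.isIntegral_iff.mp hint
  have hk' : (k : ℚ) = q := hk
  have hkd : k ^ 2 = d := by
    have : ((k : ℚ)) ^ 2 = (d : ℚ) := by rw [hk', h]
    exact_mod_cast this
  have : IsUnit k := hd k (by rw [← sq]; exact dvd_of_eq hkd)
  rcases Int.isUnit_iff.mp this with h1 | h1 <;> simp [h1] at hkd <;> omega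

/-- `1` and `s` are linearly independent over `ℚ`. -/
lemma aux_indep (d : ℤ) (hd : Squarefree d) (hd1 : d ≠ 1)
    (K : Type*) [Field K] [CharZero K] (s : K) (hs : s ^ 2 = (d : K))
    (A B : ℚ) (h : (A : K) + (B : K) * s = 0) : A = 0 ∧ B = 0 := by
  by_cases hB : B = 0
  · subst hB
    simp at h
    exact ⟨by exact_mod_cast h, rfl⟩
  · exfalso
    have hsK : s = ((-A / B : ℚ) : K) := by
      have : (B : K) ≠ 0 := by exact_mod_cast hB
      push_cast
      field_simp
      linear_combination h
    have key : (((-A / B : ℚ)) : K) ^ 2 = ((d : ℚ) : K) := by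
      rw [← hsK, hs]; norm_cast
    have h2 : ((-A / B : ℚ)) ^ 2 = (d : ℚ) := by exact_mod_cast key
    exact aux_not_sq d hd hd1 _ h2

lemma aux_expand (d : ℤ) (K : Type*) [Field K] [CharZero K] (s : K) (hs : s ^ 2 = (d : K))
    (a b : ℚ) (n : ℕ) :
    ∃ A B : ℚ, ((a : K) + (b : K) * s) ^ n = (A : K) + (B : K) * s ∧
      ((a : K) - (b : K) * s) ^ n = (A : K) - (B : K) * s := by
  induction n with
  | zero => exact ⟨1, 0, by norm_num, by norm_num⟩
  | succ n ih =>
    obtain ⟨A, B, h1, h2⟩ := ih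
    refine ⟨A * a + B * b * d, A * b + B * a, ?_, ?_⟩
    · rw [pow_succ, h1]
      push_cast
      linear_combination ((B : K) * b) * hs
    · rw [pow_succ, h2]
      push_cast
      linear_combination ((B : K) * b) * hs

/-- Let `d` be a squarefree integer with `d ≠ 0, 1`, let `p > 3` be a prime, and let
`x = a + b√d` be an element of `K = ℚ(√d)` with `a, b ∈ ℚ`.  Then `Re(x^p) = 0`
(equivalently, `x^p ∈ ℚ·√d`) if and only if `a = 0`.  Here `K` is any field of
characteristic zero containing a square root `s` of `d`. -/
theorem stmt_9 (d : ℤ) (hd : Squarefree d) (hd0 : d ≠ 0) (hd1 : d ≠ 1)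
    (K : Type*) [Field K] [CharZero K] (s : K) (hs : s ^ 2 = (d : K))
    (p : ℕ) (hp : p.Prime) (hp3 : 3 < p) (a b : ℚ) :
    (∃ n : ℚ, ((a : K) + (b : K) * s) ^ p = (n : K) * s) ↔ a = 0 := by
  have hsne : s ≠ 0 := by
    intro h
    rw [h] at hs
    simp at hs
    exact hd0 (by exact_mod_cast hs.symm)
  have hindep := aux_indep d hd hd1 K s hs
  constructor
  · rintro ⟨n, hn⟩
    obtain ⟨A, B, h1, h2⟩ := aux_expand d K s hs a b p
    -- From x^p = n s and linear independence: A = 0, B = n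
    have hA : A = 0 ∧ B - n = 0 := by
      apply hindep
      push_cast
      rw [h1] at hn
      linear_combination hn
    have hBn : B = n := by linarith [hA.2]
    -- y^p = -n s
    have hy : ((a : K) - (b : K) * s) ^ p = -((n : K) * s) := by
      rw [h2, hA.1, hBn]; push_cast; ring
    by_contra ha
    -- n ≠ 0
    have hn0 : n ≠ 0 := by
      intro h
      rw [h] at hn
      simp at hn
      exact ha (hindep a b hn.1).1
    set x : K := (a : K) + (b : K) * s with hxdef
    set y : K := (a : K) - (b : K) * s with hydef
    have hx0 : x ≠ 0 := by
      intro h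
      rw [h, zero_pow hp.ne_zero] at hn
      rcases mul_eq_zero.mp hn.symm with h' | h'
      · exact hn0 (by exact_mod_cast h')
      · exact hsne h'
    have hy0 : y ≠ 0 := by
      intro h
      rw [h, zero_pow hp.ne_zero] at hy
      have h0 : (n : K) * s = 0 := by rw [← neg_eq_zero]; exact hy.symm
      rcases mul_eq_zero.mp h0 with h' | h'
      · exact hn0 (by exact_mod_cast h')
      · exact hsne h'
    set u : K := x / y with hudef
    have hu0 : u ≠ 0 := div_ne_zero hx0 hy0
    have hns : (n : K) * s ≠ 0 := mul_ne_zero (by exact_mod_cast hn0) hsne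
    have hup : u ^ p = -1 := by
      rw [hudef, div_pow, hn, hy, div_neg, div_self hns]
    have hune : u ≠ -1 := by
      intro h
      apply ha
      rw [hudef] at h
      have hxy' : x = -1 * y := (div_eq_iff hy0).mp h
      have h2a : ((2 * a : ℚ) : K) + ((0 : ℚ) : K) * s = 0 := by
        push_cast
        linear_combination hxy'
      have := (hindep _ _ h2a).1
      linarith
    -- u is a primitive 2p-th root of unity
    have hu2p : u ^ (2 * p) = 1 := by
      rw [mul_comm, pow_mul, hup]; ring
    have hord_dvd : orderOf u ∣ 2 * p := orderOf_dvd_of_pow_eq_one hu2p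
    have hord_ne : orderOf u ≠ 0 := by
      intro h
      rw [h] at hord_dvd
      have := Nat.eq_zero_of_zero_dvd hord_dvd
      omega
    have hord_ndvd : ¬ orderOf u ∣ p := by
      intro h
      have : u ^ p = 1 := orderOf_dvd_iff_pow_eq_one.mp h
      rw [hup] at this
      exact (by norm_num : (-1 : K) ≠ 1) this
    -- classify divisors of 2p
    have hord : orderOf u = 2 * p := by
      have hmem : orderOf u ∈ (2 * p).divisors := by
        rw [Nat.mem_divisors]
        exact ⟨hord_dvd, by positivity⟩
      rw [Nat.divisors_mul, Nat.Prime.divisors Nat.prime_two, Nat.Prime.divisors hp] at hmem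
      rw [Finset.mem_mul] at hmem
      obtain ⟨c, hc, e, he, hce⟩ := hmem
      simp only [Finset.mem_insert, Finset.mem_singleton] at hc he
      rcases hc with hc | hc <;> rcases he with he | he <;> subst hc <;> subst he
      · exfalso; apply hord_ndvd; rw [← hce]; simp
      · exfalso; apply hord_ndvd; rw [← hce]; simp
      · exfalso
        have hu2 : u ^ 2 = 1 := by
          have h2 := pow_orderOf_eq_one u
          rw [← hce] at h2
          simpa using h2
        have hfac : (u - 1) * (u + 1) = 0 := by linear_combination hu2
        rcases mul_eq_zero.mp hfac with h1 | h1
        · have hu1 : u = 1 := by linear_combination h1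
          rw [hu1, one_pow] at hup
          have h20 : (2 : K) = 0 := by linear_combination hup
          norm_num at h20
        · exact hune (by linear_combination h1)
      · exact hce.symm
    have hprim : IsPrimitiveRoot u (2 * p) := hord ▸ IsPrimitiveRoot.orderOf u
    -- u satisfies a rational quadratic
    have hxy : x * y = ((a ^ 2 - b ^ 2 * d : ℚ) : K) := by
      rw [hxdef, hydef]; push_cast; linear_combination (-((b : K) ^ 2)) * hs
    have hxyne : (a ^ 2 - b ^ 2 * d : ℚ) ≠ 0 := by
      intro h
      have h0 : x * y = 0 := by rw [hxy, h]; simp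
      rcases mul_eq_zero.mp h0 with h' | h'
      · exact hx0 h'
      · exact hy0 h'
    set t : ℚ := (2 * a ^ 2 + 2 * b ^ 2 * d) / (a ^ 2 - b ^ 2 * d) with htdef
    have hquad : u ^ 2 - (t : K) * u + 1 = 0 := by
      have hxyK : x * y ≠ 0 := by rw [hxy]; exact_mod_cast hxyne
      have h1 : x ^ 2 + y ^ 2 = ((2 * a ^ 2 + 2 * b ^ 2 * d : ℚ) : K) := by
        rw [hxdef, hydef]; push_cast; linear_combination (2 * (b:K)^2) * hs
      have ht : (t : K) = (x ^ 2 + y ^ 2) / (x * y) := by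
        rw [h1, hxy, htdef]; push_cast [hxyne]; ring
      rw [hudef, ht]
      field_simp
      ring
    -- degree bounds
    have hmin : minpoly ℚ u = cyclotomic (2 * p) ℚ :=
      (Polynomial.cyclotomic_eq_minpoly_rat hprim (by positivity)).symm
    have hq : (X ^ 2 - C t * X + 1 : ℚ[X]).Monic := by
      have e : (X ^ 2 - C t * X + 1 : ℚ[X]) = X ^ 2 + (C (-t) * X + C 1) := by
        simp only [map_neg, map_one]
        ring
      rw [e]
      apply Polynomial.monic_X_pow_add
      refine lt_of_le_of_lt (Polynomial.degree_linear_le) ?_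
      exact_mod_cast one_lt_two
    have haev : Polynomial.aeval u (X ^ 2 - C t * X + 1 : ℚ[X]) = 0 := by
      simp only [map_add, map_sub, map_mul, map_pow, map_one, aeval_X, aeval_C,
        eq_ratCast]
      linear_combination hquad
    have hdeg := minpoly.min ℚ u hq haev
    rw [hmin] at hdeg
    have hdle : (cyclotomic (2 * p) ℚ).natDegree ≤ (X ^ 2 - C t * X + 1 : ℚ[X]).natDegree :=
      Polynomial.natDegree_le_natDegree hdeg
    rw [Polynomial.natDegree_cyclotomic] at hdle
    have htot : (2 * p).totient = p - 1 := by
      rw [Nat.totient_mul (Nat.coprime_two_left.mpr (hp.odd_of_ne_two (by omega))), Nat.totient_two, Nat.totient_prime hp]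
      ring
    have hqdeg : (X ^ 2 - C t * X + 1 : ℚ[X]).natDegree ≤ 2 := by
      compute_degree
    omega
  · rintro rfl
    obtain ⟨k, hk⟩ := hp.odd_of_ne_two (by omega)
    refine ⟨b ^ p * d ^ k, ?_⟩
    rw [hk]
    have hsp : s ^ (2 * k + 1) = ((d : K)) ^ k * s := by
      rw [pow_add, pow_mul, hs, pow_one]
    push_cast
    rw [zero_add, mul_pow, hsp]
    ring
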